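/- Let H ≥ 1 be an integer, b ∈ ℝ_{≥0}^H, and define B_{H'} = Σ_{h=1}^{H'} b_h for H' = 0,...,H. Let 0 < a_1 ≤ a_2 ≤ ... ≤ a_H be real numbers and α > 0 such that B_{H'} ≤ α·a_{H'} for every H' ∈ [H]. Then Σ_{h=1}^H b_h/a_h ≤ α(ln(a_H/a_1) + 1). -/

import Mathlib

lemma aux_0 (α : ℝ) (hα : 0 < α) (b a : ℕ → ℝ) :
    ∀ H, 1 ≤ H →
    (∀ h ∈ Finset.Icc 1 H, 0 ≤ b h) →
    (∀ h ∈ Finset.Icc 1 H, 0 < a h) →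
    (∀ h ∈ Finset.Icc 1 H, ∀ h' ∈ Finset.Icc 1 H, h ≤ h' → a h ≤ a h') →
    (∀ H' ∈ Finset.Icc 1 H, ∑ h ∈ Finset.Icc 1 H', b h ≤ α * a H') →
    ∑ h ∈ Finset.Icc 1 H, b h / a h ≤
      α * Real.log (a H / a 1) + (∑ h ∈ Finset.Icc 1 H, b h) / a H := by
  intro H hH1
  induction H, hH1 using Nat.le_induction with
  | base =>
    intro hb ha_pos ha_mono hB
    have h1 : a 1 ≠ 0 := (ha_pos 1 (by simp)).ne'
    simp [div_self h1]
  | succ H hH ih =>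
    intro hb ha_pos ha_mono hB
    have hsub : Finset.Icc 1 H ⊆ Finset.Icc 1 (H + 1) := by
      apply Finset.Icc_subset_Icc_right; omega
    have ih' := ih (fun h hh => hb h (hsub hh)) (fun h hh => ha_pos h (hsub hh))
      (fun h hh h' hh' => ha_mono h (hsub hh) h' (hsub hh'))
      (fun H' hH' => hB H' (hsub hH'))
    have hmem1 : (1 : ℕ) ∈ Finset.Icc 1 (H + 1) := by simp
    have hmemH : H ∈ Finset.Icc 1 (H + 1) := by simp; omega
    have hmemS : H + 1 ∈ Finset.Icc 1 (H + 1) := by simp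
    have hp1 : 0 < a 1 := ha_pos 1 hmem1
    have hpH : 0 < a H := ha_pos H hmemH
    have hpS : 0 < a (H + 1) := ha_pos (H + 1) hmemS
    have hle : a H ≤ a (H + 1) := ha_mono H hmemH (H + 1) hmemS (by omega)
    have hle1 : a 1 ≤ a H := ha_mono 1 hmem1 H hmemH hH
    set B := ∑ h ∈ Finset.Icc 1 H, b h with hBdef
    have hBnn : 0 ≤ B := Finset.sum_nonneg fun h hh => hb h (hsub hh)
    have hBle : B ≤ α * a H := hB H hmemH
    have hbnn : 0 ≤ b (H + 1) := hb (H + 1) hmemS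
    have hsumsplit : ∑ h ∈ Finset.Icc 1 (H + 1), b h / a h
        = (∑ h ∈ Finset.Icc 1 H, b h / a h) + b (H + 1) / a (H + 1) :=
      Finset.sum_Icc_succ_top (by omega) _
    have hsumsplit2 : ∑ h ∈ Finset.Icc 1 (H + 1), b h = B + b (H + 1) :=
      Finset.sum_Icc_succ_top (by omega) _
    -- key logarithmic inequality
    have hlogkey : 1 - a H / a (H + 1) ≤ Real.log (a (H + 1)) - Real.log (a H) := by
      have := Real.log_le_sub_one_of_pos (div_pos hpH hpS)
      rw [Real.log_div hpH.ne' hpS.ne'] at this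
      linarith
    have key : B / a H - B / a (H + 1) ≤ α * (Real.log (a (H + 1)) - Real.log (a H)) := by
      have h1 : B / a H - B / a (H + 1) = B * (a (H + 1) - a H) / (a H * a (H + 1)) := by
        field_simp
      have h2 : B * (a (H + 1) - a H) / (a H * a (H + 1))
          ≤ (α * a H) * (a (H + 1) - a H) / (a H * a (H + 1)) := by
        gcongr
        all_goals linarith
      have h3 : (α * a H) * (a (H + 1) - a H) / (a H * a (H + 1))
          = α * (1 - a H / a (H + 1)) := by
        field_simp
      have h4 : α * (1 - a H / a (H + 1)) ≤ α * (Real.log (a (H + 1)) - Real.log (a H)) :=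
        mul_le_mul_of_nonneg_left hlogkey hα.le
      linarith
    have hlogS : Real.log (a (H + 1) / a 1) = Real.log (a (H + 1)) - Real.log (a 1) :=
      Real.log_div hpS.ne' hp1.ne'
    have hlogH : Real.log (a H / a 1) = Real.log (a H) - Real.log (a 1) :=
      Real.log_div hpH.ne' hp1.ne'
    rw [hsumsplit, hsumsplit2, hlogS]
    rw [hlogH] at ih'
    have hdiv : (B + b (H + 1)) / a (H + 1) = B / a (H + 1) + b (H + 1) / a (H + 1) :=
      add_div _ _ _
    linarith

/-- Technical lemma: if partial sums of nonnegative `b` are bounded by `α * a`,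
with `a` positive and nondecreasing, then `∑ b h / a h ≤ α (ln (a H / a 1) + 1)`. -/
theorem stmt_0 (H : ℕ) (hH : 1 ≤ H) (b a : ℕ → ℝ)
    (hb : ∀ h ∈ Finset.Icc 1 H, 0 ≤ b h)
    (ha_pos : ∀ h ∈ Finset.Icc 1 H, 0 < a h)
    (ha_mono : ∀ h ∈ Finset.Icc 1 H, ∀ h' ∈ Finset.Icc 1 H, h ≤ h' → a h ≤ a h')
    (α : ℝ) (hα : 0 < α)
    (hB : ∀ H' ∈ Finset.Icc 1 H, ∑ h ∈ Finset.Icc 1 H', b h ≤ α * a H') :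
    ∑ h ∈ Finset.Icc 1 H, b h / a h ≤ α * (Real.log (a H / a 1) + 1) := by
  have haux := aux_0 α hα b a H hH hb ha_pos ha_mono hB
  have hmemH : H ∈ Finset.Icc 1 H := by simp; omega
  have hpH : 0 < a H := ha_pos H hmemH
  have hlast : (∑ h ∈ Finset.Icc 1 H, b h) / a H ≤ α := by
    rw [div_le_iff₀ hpH]
    exact hB H hmemH
  calc ∑ h ∈ Finset.Icc 1 H, b h / a h
      ≤ α * Real.log (a H / a 1) + (∑ h ∈ Finset.Icc 1 H, b h) / a H := haux
    _ ≤ α * Real.log (a H / a 1) + α := by linarith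
    _ = α * (Real.log (a H / a 1) + 1) := by ring
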